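/- Let g be the morphism g(0) = 011010011011001101001, g(1) = 100101100110110010110. Define A_0 = 0110110 and A_{n+1} = (011010)^{-1} g(A_n) (removal of the prefix 011010, which is always a prefix of g(A_n)). Then for every n ≥ 0, A_n is a prefix of A_{n+1}. -/

import Mathlib

def g (w : List Bool) : List Bool :=
  w.flatMap (fun b => if b then [true, false, false, true, false, true, true, false, false, true, true, false, true, true, false, false, true, false, true, true, false] else [false, true, true, false, true, false, false, true, true, false, true, true, false, false, true, true, false, true, false, false, true])

def A : ℕ → List Bool
  | 0 => [false, true, true, false, true, true, false]
  | n + 1 => (g (A n)).drop 6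

lemma g_append (u v : List Bool) : g (u ++ v) = g u ++ g v := by
  simp [g]

lemma g_mono {u v : List Bool} (h : u <+: v) : g u <+: g v := by
  obtain ⟨t, rfl⟩ := h
  exact ⟨g t, (g_append u t).symm⟩

lemma drop_prefix {u v : List Bool} (h : u <+: v) (n : ℕ) (hn : n ≤ u.length) :
    u.drop n <+: v.drop n := by
  obtain ⟨t, rfl⟩ := h
  rw [List.drop_append_of_le_length hn]
  exact ⟨t, rfl⟩

theorem stmt16 : ∀ n : ℕ, [false, true, true, false, true, false] <+: g (A n) ∧ A n <+: A (n + 1) := by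
  intro n
  induction n with
  | zero =>
    constructor
    · decide
    · decide
  | succ n ih =>
    obtain ⟨h1, h2⟩ := ih
    have hg : g (A n) <+: g (A (n + 1)) := g_mono h2
    have h1' : [false, true, true, false, true, false] <+: g (A (n + 1)) := h1.trans hg
    refine ⟨h1', ?_⟩
    show (g (A n)).drop 6 <+: (g (A (n+1))).drop 6
    exact drop_prefix hg 6 (le_trans (by simpa using h1.length_le) le_rfl)
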